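/- Let gC, gD, hC, hD, N0 be positive real constants and define F2(pC, pD, z1, z2, y1, y2) = log(1+z1) + log(1+z2) − z1 + 2·y1·√((1+z1)·pC·gC) − y1²·(pC·gC + N0 + pD·hD) − z2 + 2·y2·√((1+z2)·pD·gD) − y2²·(pD·gD + N0 + pC·hC), where log is the natural logarithm and √ is the real square root. Then F2 satisfies the Kurdyka–Łojasiewicz property at every point x̄ = (p̄C, p̄D, z̄1, z̄2, ȳ1, ȳ2) with all coordinates positive: there exist θ ∈ [1/2, 1), a constant η > 0, and an open neighborhood U of x̄ such that for all x ∈ U with positive coordinates, |F2(x) − F2(x̄)|^θ ≤ η · ‖∇F2(x)‖, where ∇F2 denotes the gradient (Fréchet derivative) of F2. -/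

import Mathlib

/-- The quadratic-transformed objective `F2` as a function of six real
variables `(pC, pD, z1, z2, y1, y2)`. -/
noncomputable def F2 (gC gD hC hD N0 : ℝ) (x : ℝ × ℝ × ℝ × ℝ × ℝ × ℝ) : ℝ :=
  match x with
  | (pC, pD, z1, z2, y1, y2) =>
    Real.log (1 + z1) + Real.log (1 + z2)
      - z1 + 2 * y1 * Real.sqrt ((1 + z1) * pC * gC)
      - y1 ^ 2 * (pC * gC + N0 + pD * hD)
      - z2 + 2 * y2 * Real.sqrt ((1 + z2) * pD * gD)
      - y2 ^ 2 * (pD * gD + N0 + pC * hC)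

/-- A point of `ℝ⁶` has all coordinates positive. -/
def AllPos (x : ℝ × ℝ × ℝ × ℝ × ℝ × ℝ) : Prop :=
  0 < x.1 ∧ 0 < x.2.1 ∧ 0 < x.2.2.1 ∧ 0 < x.2.2.2.1 ∧ 0 < x.2.2.2.2.1 ∧
    0 < x.2.2.2.2.2

lemma diffF2 (gC gD hC hD N0 : ℝ) (hgC : 0 < gC) (hgD : 0 < gD)
    (x : ℝ × ℝ × ℝ × ℝ × ℝ × ℝ) (hx : AllPos x) :
    DifferentiableAt ℝ (F2 gC gD hC hD N0) x := by
  obtain ⟨h1, h2, h3, h4, h5, h6⟩ := hx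
  have hQ1 : (0:ℝ) < (1 + x.2.2.1) * x.1 * gC := by positivity
  have hQ2 : (0:ℝ) < (1 + x.2.2.2.1) * x.2.1 * gD := by positivity
  have hs1 : DifferentiableAt ℝ
      (fun x : ℝ × ℝ × ℝ × ℝ × ℝ × ℝ => Real.sqrt ((1 + x.2.2.1) * x.1 * gC)) x :=
    DifferentiableAt.sqrt (by fun_prop) hQ1.ne'
  have hs2 : DifferentiableAt ℝ
      (fun x : ℝ × ℝ × ℝ × ℝ × ℝ × ℝ => Real.sqrt ((1 + x.2.2.2.1) * x.2.1 * gD)) x :=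
    DifferentiableAt.sqrt (by fun_prop) hQ2.ne'
  have hz1 : 1 + x.2.2.1 ≠ 0 := by positivity
  have hz2 : 1 + x.2.2.2.1 ≠ 0 := by positivity
  show DifferentiableAt ℝ (fun x : ℝ × ℝ × ℝ × ℝ × ℝ × ℝ =>
    Real.log (1 + x.2.2.1) + Real.log (1 + x.2.2.2.1)
      - x.2.2.1 + 2 * x.2.2.2.2.1 * Real.sqrt ((1 + x.2.2.1) * x.1 * gC)
      - x.2.2.2.2.1 ^ 2 * (x.1 * gC + N0 + x.2.1 * hD)
      - x.2.2.2.1 + 2 * x.2.2.2.2.2 * Real.sqrt ((1 + x.2.2.2.1) * x.2.1 * gD)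
      - x.2.2.2.2.2 ^ 2 * (x.2.1 * gD + N0 + x.1 * hC)) x
  fun_prop (disch := assumption)

lemma partials (gC gD hC hD N0 : ℝ) (hgC : 0 < gC) (hgD : 0 < gD)
    (pC pD z1 z2 y1 y2 : ℝ) (hpC : 0 < pC) (hpD : 0 < pD) (hz1 : 0 < z1)
    (hz2 : 0 < z2) (hy1 : 0 < y1) (hy2 : 0 < y2) :
    fderiv ℝ (F2 gC gD hC hD N0) (pC, pD, z1, z2, y1, y2) (1,0,0,0,0,0)
        = 2*y1*((1+z1)*gC/(2*Real.sqrt ((1+z1)*pC*gC))) - y1^2*gC - y2^2*hC ∧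
    fderiv ℝ (F2 gC gD hC hD N0) (pC, pD, z1, z2, y1, y2) (0,1,0,0,0,0)
        = 2*y2*((1+z2)*gD/(2*Real.sqrt ((1+z2)*pD*gD))) - y2^2*gD - y1^2*hD ∧
    fderiv ℝ (F2 gC gD hC hD N0) (pC, pD, z1, z2, y1, y2) (0,0,1,0,0,0)
        = 1/(1+z1) - 1 + 2*y1*(pC*gC/(2*Real.sqrt ((1+z1)*pC*gC))) ∧
    fderiv ℝ (F2 gC gD hC hD N0) (pC, pD, z1, z2, y1, y2) (0,0,0,1,0,0)
        = 1/(1+z2) - 1 + 2*y2*(pD*gD/(2*Real.sqrt ((1+z2)*pD*gD))) ∧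
    fderiv ℝ (F2 gC gD hC hD N0) (pC, pD, z1, z2, y1, y2) (0,0,0,0,1,0)
        = 2*Real.sqrt ((1+z1)*pC*gC) - 2*y1*(pC*gC+N0+pD*hD) ∧
    fderiv ℝ (F2 gC gD hC hD N0) (pC, pD, z1, z2, y1, y2) (0,0,0,0,0,1)
        = 2*Real.sqrt ((1+z2)*pD*gD) - 2*y2*(pD*gD+N0+pC*hC) := by
  have hall : AllPos (pC, pD, z1, z2, y1, y2) := ⟨hpC, hpD, hz1, hz2, hy1, hy2⟩
  have hdiff := (diffF2 gC gD hC hD N0 hgC hgD _ hall).hasFDerivAt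
  have hQ1 : (0:ℝ) < (1+z1)*pC*gC := by positivity
  have hQ2 : (0:ℝ) < (1+z2)*pD*gD := by positivity
  have h1z1 : (0:ℝ) < 1 + z1 := by linarith
  have h1z2 : (0:ℝ) < 1 + z2 := by linarith
  refine ⟨?_, ?_, ?_, ?_, ?_, ?_⟩
  · -- partial in pC
    have hφ : HasDerivAt (fun t : ℝ => ((t, pD, z1, z2, y1, y2) : ℝ×ℝ×ℝ×ℝ×ℝ×ℝ))
        (1,0,0,0,0,0) pC :=
      (hasDerivAt_id pC).prodMk ((hasDerivAt_const pC pD).prodMk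
        ((hasDerivAt_const pC z1).prodMk ((hasDerivAt_const pC z2).prodMk
        ((hasDerivAt_const pC y1).prodMk (hasDerivAt_const pC y2)))))
    have hc : HasDerivAt (fun t : ℝ => F2 gC gD hC hD N0 (t, pD, z1, z2, y1, y2))
        (fderiv ℝ (F2 gC gD hC hD N0) (pC, pD, z1, z2, y1, y2) (1,0,0,0,0,0)) pC :=
      hdiff.comp_hasDerivAt (f := fun t : ℝ => ((t, pD, z1, z2, y1, y2) : ℝ×ℝ×ℝ×ℝ×ℝ×ℝ)) pC hφ
    have hsq : HasDerivAt (fun t : ℝ => Real.sqrt ((1+z1)*t*gC))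
        (((1+z1)*1*gC)/(2*Real.sqrt ((1+z1)*pC*gC))) pC :=
      (((hasDerivAt_id pC).const_mul (1+z1)).mul_const gC).sqrt hQ1.ne'
    have hg : HasDerivAt (fun t : ℝ => F2 gC gD hC hD N0 (t, pD, z1, z2, y1, y2))
        (2*y1*((1+z1)*gC/(2*Real.sqrt ((1+z1)*pC*gC))) - y1^2*gC - y2^2*hC) pC := by
      have h := ((((((hasDerivAt_const pC
          (Real.log (1+z1) + Real.log (1+z2))).sub_const z1).add
          (hsq.const_mul (2*y1))).sub
          (((((hasDerivAt_id pC).mul_const gC).add_const N0).add_const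
            (pD*hD)).const_mul (y1^2))).sub_const z2).add_const
          (2*y2*Real.sqrt ((1+z2)*pD*gD))).sub
          ((((hasDerivAt_id pC).mul_const hC).const_add (pD*gD+N0)).const_mul (y2^2))
      exact h.congr_deriv (by ring)
    exact hc.unique hg
  · -- partial in pD
    have hφ : HasDerivAt (fun t : ℝ => ((pC, t, z1, z2, y1, y2) : ℝ×ℝ×ℝ×ℝ×ℝ×ℝ))
        (0,1,0,0,0,0) pD :=
      (hasDerivAt_const pD pC).prodMk ((hasDerivAt_id pD).prodMk
        ((hasDerivAt_const pD z1).prodMk ((hasDerivAt_const pD z2).prodMk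
        ((hasDerivAt_const pD y1).prodMk (hasDerivAt_const pD y2)))))
    have hc : HasDerivAt (fun t : ℝ => F2 gC gD hC hD N0 (pC, t, z1, z2, y1, y2))
        (fderiv ℝ (F2 gC gD hC hD N0) (pC, pD, z1, z2, y1, y2) (0,1,0,0,0,0)) pD :=
      hdiff.comp_hasDerivAt (f := fun t : ℝ => ((pC, t, z1, z2, y1, y2) : ℝ×ℝ×ℝ×ℝ×ℝ×ℝ)) pD hφ
    have hsq : HasDerivAt (fun t : ℝ => Real.sqrt ((1+z2)*t*gD))
        (((1+z2)*1*gD)/(2*Real.sqrt ((1+z2)*pD*gD))) pD :=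
      (((hasDerivAt_id pD).const_mul (1+z2)).mul_const gD).sqrt hQ2.ne'
    have hg : HasDerivAt (fun t : ℝ => F2 gC gD hC hD N0 (pC, t, z1, z2, y1, y2))
        (2*y2*((1+z2)*gD/(2*Real.sqrt ((1+z2)*pD*gD))) - y2^2*gD - y1^2*hD) pD := by
      have h := ((((((hasDerivAt_const pD
          (Real.log (1+z1) + Real.log (1+z2))).sub_const z1).add_const
          (2*y1*Real.sqrt ((1+z1)*pC*gC))).sub
          ((((hasDerivAt_id pD).mul_const hD).const_add (pC*gC+N0)).const_mul
            (y1^2))).sub_const z2).add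
          (hsq.const_mul (2*y2))).sub
          (((((hasDerivAt_id pD).mul_const gD).add_const N0).add_const
            (pC*hC)).const_mul (y2^2))
      exact h.congr_deriv (by ring)
    exact hc.unique hg
  · -- partial in z1
    have hφ : HasDerivAt (fun t : ℝ => ((pC, pD, t, z2, y1, y2) : ℝ×ℝ×ℝ×ℝ×ℝ×ℝ))
        (0,0,1,0,0,0) z1 :=
      (hasDerivAt_const z1 pC).prodMk ((hasDerivAt_const z1 pD).prodMk
        ((hasDerivAt_id z1).prodMk ((hasDerivAt_const z1 z2).prodMk
        ((hasDerivAt_const z1 y1).prodMk (hasDerivAt_const z1 y2)))))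
    have hc : HasDerivAt (fun t : ℝ => F2 gC gD hC hD N0 (pC, pD, t, z2, y1, y2))
        (fderiv ℝ (F2 gC gD hC hD N0) (pC, pD, z1, z2, y1, y2) (0,0,1,0,0,0)) z1 :=
      hdiff.comp_hasDerivAt (f := fun t : ℝ => ((pC, pD, t, z2, y1, y2) : ℝ×ℝ×ℝ×ℝ×ℝ×ℝ)) z1 hφ
    have hsq : HasDerivAt (fun t : ℝ => Real.sqrt ((1+t)*pC*gC))
        ((1*pC*gC)/(2*Real.sqrt ((1+z1)*pC*gC))) z1 :=
      ((((hasDerivAt_id z1).const_add 1).mul_const pC).mul_const gC).sqrt hQ1.ne'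
    have hlog : HasDerivAt (fun t : ℝ => Real.log (1+t)) (1/(1+z1)) z1 :=
      ((hasDerivAt_id z1).const_add 1).log h1z1.ne'
    have hg : HasDerivAt (fun t : ℝ => F2 gC gD hC hD N0 (pC, pD, t, z2, y1, y2))
        (1/(1+z1) - 1 + 2*y1*(pC*gC/(2*Real.sqrt ((1+z1)*pC*gC)))) z1 := by
      have h := ((((((hlog.add_const (Real.log (1+z2))).sub
          (hasDerivAt_id z1)).add
          (hsq.const_mul (2*y1))).sub_const
          (y1^2*(pC*gC+N0+pD*hD))).sub_const z2).add_const
          (2*y2*Real.sqrt ((1+z2)*pD*gD))).sub_const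
          (y2^2*(pD*gD+N0+pC*hC))
      exact h.congr_deriv (by ring)
    exact hc.unique hg
  · -- partial in z2
    have hφ : HasDerivAt (fun t : ℝ => ((pC, pD, z1, t, y1, y2) : ℝ×ℝ×ℝ×ℝ×ℝ×ℝ))
        (0,0,0,1,0,0) z2 :=
      (hasDerivAt_const z2 pC).prodMk ((hasDerivAt_const z2 pD).prodMk
        ((hasDerivAt_const z2 z1).prodMk ((hasDerivAt_id z2).prodMk
        ((hasDerivAt_const z2 y1).prodMk (hasDerivAt_const z2 y2)))))
    have hc : HasDerivAt (fun t : ℝ => F2 gC gD hC hD N0 (pC, pD, z1, t, y1, y2))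
        (fderiv ℝ (F2 gC gD hC hD N0) (pC, pD, z1, z2, y1, y2) (0,0,0,1,0,0)) z2 :=
      hdiff.comp_hasDerivAt (f := fun t : ℝ => ((pC, pD, z1, t, y1, y2) : ℝ×ℝ×ℝ×ℝ×ℝ×ℝ)) z2 hφ
    have hsq : HasDerivAt (fun t : ℝ => Real.sqrt ((1+t)*pD*gD))
        ((1*pD*gD)/(2*Real.sqrt ((1+z2)*pD*gD))) z2 :=
      ((((hasDerivAt_id z2).const_add 1).mul_const pD).mul_const gD).sqrt hQ2.ne'
    have hlog : HasDerivAt (fun t : ℝ => Real.log (1+t)) (1/(1+z2)) z2 :=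
      ((hasDerivAt_id z2).const_add 1).log h1z2.ne'
    have hg : HasDerivAt (fun t : ℝ => F2 gC gD hC hD N0 (pC, pD, z1, t, y1, y2))
        (1/(1+z2) - 1 + 2*y2*(pD*gD/(2*Real.sqrt ((1+z2)*pD*gD)))) z2 := by
      have h := (((((((hlog.const_add (Real.log (1+z1))).sub_const z1).add_const
          (2*y1*Real.sqrt ((1+z1)*pC*gC))).sub_const
          (y1^2*(pC*gC+N0+pD*hD))).sub
          (hasDerivAt_id z2)).add
          (hsq.const_mul (2*y2))).sub_const
          (y2^2*(pD*gD+N0+pC*hC)))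
      exact h.congr_deriv (by ring)
    exact hc.unique hg
  · -- partial in y1
    have hφ : HasDerivAt (fun t : ℝ => ((pC, pD, z1, z2, t, y2) : ℝ×ℝ×ℝ×ℝ×ℝ×ℝ))
        (0,0,0,0,1,0) y1 :=
      (hasDerivAt_const y1 pC).prodMk ((hasDerivAt_const y1 pD).prodMk
        ((hasDerivAt_const y1 z1).prodMk ((hasDerivAt_const y1 z2).prodMk
        ((hasDerivAt_id y1).prodMk (hasDerivAt_const y1 y2)))))
    have hc : HasDerivAt (fun t : ℝ => F2 gC gD hC hD N0 (pC, pD, z1, z2, t, y2))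
        (fderiv ℝ (F2 gC gD hC hD N0) (pC, pD, z1, z2, y1, y2) (0,0,0,0,1,0)) y1 :=
      hdiff.comp_hasDerivAt (f := fun t : ℝ => ((pC, pD, z1, z2, t, y2) : ℝ×ℝ×ℝ×ℝ×ℝ×ℝ)) y1 hφ
    have hg : HasDerivAt (fun t : ℝ => F2 gC gD hC hD N0 (pC, pD, z1, z2, t, y2))
        (2*Real.sqrt ((1+z1)*pC*gC) - 2*y1*(pC*gC+N0+pD*hD)) y1 := by
      have h := ((((((hasDerivAt_const y1
          (Real.log (1+z1) + Real.log (1+z2))).sub_const z1).add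
          (((hasDerivAt_id y1).const_mul 2).mul_const
            (Real.sqrt ((1+z1)*pC*gC)))).sub
          ((hasDerivAt_pow 2 y1).mul_const (pC*gC+N0+pD*hD))).sub_const z2).add_const
          (2*y2*Real.sqrt ((1+z2)*pD*gD))).sub_const
          (y2^2*(pD*gD+N0+pC*hC))
      exact h.congr_deriv (by push_cast; ring)
    exact hc.unique hg
  · -- partial in y2
    have hφ : HasDerivAt (fun t : ℝ => ((pC, pD, z1, z2, y1, t) : ℝ×ℝ×ℝ×ℝ×ℝ×ℝ))
        (0,0,0,0,0,1) y2 :=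
      (hasDerivAt_const y2 pC).prodMk ((hasDerivAt_const y2 pD).prodMk
        ((hasDerivAt_const y2 z1).prodMk ((hasDerivAt_const y2 z2).prodMk
        ((hasDerivAt_const y2 y1).prodMk (hasDerivAt_id y2)))))
    have hc : HasDerivAt (fun t : ℝ => F2 gC gD hC hD N0 (pC, pD, z1, z2, y1, t))
        (fderiv ℝ (F2 gC gD hC hD N0) (pC, pD, z1, z2, y1, y2) (0,0,0,0,0,1)) y2 :=
      hdiff.comp_hasDerivAt (f := fun t : ℝ => ((pC, pD, z1, z2, y1, t) : ℝ×ℝ×ℝ×ℝ×ℝ×ℝ)) y2 hφ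
    have hg : HasDerivAt (fun t : ℝ => F2 gC gD hC hD N0 (pC, pD, z1, z2, y1, t))
        (2*Real.sqrt ((1+z2)*pD*gD) - 2*y2*(pD*gD+N0+pC*hC)) y2 := by
      have h := ((((((hasDerivAt_const y2
          (Real.log (1+z1) + Real.log (1+z2))).sub_const z1).add_const
          (2*y1*Real.sqrt ((1+z1)*pC*gC))).sub_const
          (y1^2*(pC*gC+N0+pD*hD))).sub_const z2).add
          (((hasDerivAt_id y2).const_mul 2).mul_const
            (Real.sqrt ((1+z2)*pD*gD)))).sub
          ((hasDerivAt_pow 2 y2).mul_const (pD*gD+N0+pC*hC))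
      exact h.congr_deriv (by push_cast; ring)
    exact hc.unique hg

lemma no_crit (gC gD hC hD N0 pC pD z1 z2 y1 y2 S1 S2 : ℝ)
    (hgC : 0 < gC) (hgD : 0 < gD) (hhC : 0 < hC) (hhD : 0 < hD) (hN0 : 0 < N0)
    (hpC : 0 < pC) (hpD : 0 < pD) (hz1 : 0 < z1) (hz2 : 0 < z2)
    (hy1 : 0 < y1) (hy2 : 0 < y2)
    (hS1 : S1^2 = (1+z1)*pC*gC) (hS1p : 0 < S1)
    (hS2 : S2^2 = (1+z2)*pD*gD) (hS2p : 0 < S2)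
    (E1 : 2*y1*((1+z1)*gC/(2*S1)) - y1^2*gC - y2^2*hC = 0)
    (E2 : 2*y2*((1+z2)*gD/(2*S2)) - y2^2*gD - y1^2*hD = 0)
    (E3 : 1/(1+z1) - 1 + 2*y1*(pC*gC/(2*S1)) = 0)
    (E4 : 1/(1+z2) - 1 + 2*y2*(pD*gD/(2*S2)) = 0)
    (E5 : 2*S1 - 2*y1*(pC*gC+N0+pD*hD) = 0)
    (E6 : 2*S2 - 2*y2*(pD*gD+N0+pC*hC) = 0) : False := by
  have h1z1 : (0:ℝ) < 1+z1 := by linarith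
  have h1z2 : (0:ℝ) < 1+z2 := by linarith
  field_simp at E1 E2 E3 E4
  have hk1 : S1*(y1*S1 - z1) = 0 := by linear_combination y1*hS1 + E3
  have k1 : y1*S1 = z1 := by
    have := (mul_eq_zero.mp hk1).resolve_left hS1p.ne'
    linarith
  have hk2 : S2*(y2*S2 - z2) = 0 := by linear_combination y2*hS2 + E4
  have k2 : y2*S2 = z2 := by
    have := (mul_eq_zero.mp hk2).resolve_left hS2p.ne'
    linarith
  have h5 : S1 = y1*(pC*gC+N0+pD*hD) := by linarith
  have h6 : S2 = y2*(pD*gD+N0+pC*hC) := by linarith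
  have P1 : z1*(N0+pD*hD) = pC*gC := by
    linear_combination hS1 - (pC*gC+N0+pD*hD)*k1 - S1*h5
  have P2 : z2*(N0+pC*hC) = pD*gD := by
    linear_combination hS2 - (pD*gD+N0+pC*hC)*k2 - S2*h6
  have G1 : y1^2*gC = y2^2*hC*z1 := by
    linear_combination y1*E1 + (y1^2*gC+y2^2*hC)*k1
  have G2 : y2^2*gD = y1^2*hD*z2 := by
    linear_combination y2*E2 + (y2^2*gD+y1^2*hD)*k2
  have hH : y1^2*y2^2*(gC*gD - hC*hD*(z1*z2)) = 0 := by
    linear_combination (y2^2*gD)*G1 + (y2^2*hC*z1)*G2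
  have H : gC*gD - hC*hD*(z1*z2) = 0 :=
    (mul_eq_zero.mp hH).resolve_left (by positivity)
  have final : z1*z2*((N0+pD*hD)*(N0+pC*hC) - pC*pD*(hC*hD)) = 0 := by
    linear_combination pC*pD*H + z2*(N0+pC*hC)*P1 + pC*gC*P2
  have fin2 : (N0+pD*hD)*(N0+pC*hC) - pC*pD*(hC*hD) = 0 :=
    (mul_eq_zero.mp final).resolve_left (by positivity)
  nlinarith [mul_pos hN0 hN0, mul_pos (mul_pos hN0 hpC) hhC,
    mul_pos (mul_pos hN0 hpD) hhD]


lemma contD1 (gC hC : ℝ) (pC pD z1 z2 y1 y2 : ℝ)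
    (hne : Real.sqrt ((1 + z1) * pC * gC) ≠ 0) :
    ContinuousAt (fun x : ℝ×ℝ×ℝ×ℝ×ℝ×ℝ =>
      2*x.2.2.2.2.1*((1+x.2.2.1)*gC/(2*Real.sqrt ((1+x.2.2.1)*x.1*gC)))
        - x.2.2.2.2.1^2*gC - x.2.2.2.2.2^2*hC) (pC, pD, z1, z2, y1, y2) := by
  fun_prop (disch := first | assumption | simp_all | positivity)

lemma contD2 (gD hD : ℝ) (pC pD z1 z2 y1 y2 : ℝ)
    (hne : Real.sqrt ((1 + z2) * pD * gD) ≠ 0) :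
    ContinuousAt (fun x : ℝ×ℝ×ℝ×ℝ×ℝ×ℝ =>
      2*x.2.2.2.2.2*((1+x.2.2.2.1)*gD/(2*Real.sqrt ((1+x.2.2.2.1)*x.2.1*gD)))
        - x.2.2.2.2.2^2*gD - x.2.2.2.2.1^2*hD) (pC, pD, z1, z2, y1, y2) := by
  fun_prop (disch := first | assumption | simp_all | positivity)

lemma contD3 (gC : ℝ) (pC pD z1 z2 y1 y2 : ℝ)
    (hne : Real.sqrt ((1 + z1) * pC * gC) ≠ 0) (hz : 1 + z1 ≠ 0) :
    ContinuousAt (fun x : ℝ×ℝ×ℝ×ℝ×ℝ×ℝ =>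
      1/(1+x.2.2.1) - 1 + 2*x.2.2.2.2.1*(x.1*gC/(2*Real.sqrt ((1+x.2.2.1)*x.1*gC))))
      (pC, pD, z1, z2, y1, y2) := by
  fun_prop (disch := first | assumption | simp_all | positivity)

lemma contD4 (gD : ℝ) (pC pD z1 z2 y1 y2 : ℝ)
    (hne : Real.sqrt ((1 + z2) * pD * gD) ≠ 0) (hz : 1 + z2 ≠ 0) :
    ContinuousAt (fun x : ℝ×ℝ×ℝ×ℝ×ℝ×ℝ =>
      1/(1+x.2.2.2.1) - 1 + 2*x.2.2.2.2.2*(x.2.1*gD/(2*Real.sqrt ((1+x.2.2.2.1)*x.2.1*gD))))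
      (pC, pD, z1, z2, y1, y2) := by
  fun_prop (disch := first | assumption | simp_all | positivity)

lemma contD5 (gC hD N0 : ℝ) (pC pD z1 z2 y1 y2 : ℝ) :
    ContinuousAt (fun x : ℝ×ℝ×ℝ×ℝ×ℝ×ℝ =>
      2*Real.sqrt ((1+x.2.2.1)*x.1*gC) - 2*x.2.2.2.2.1*(x.1*gC+N0+x.2.1*hD))
      (pC, pD, z1, z2, y1, y2) := by
  fun_prop

lemma contD6 (gD hC N0 : ℝ) (pC pD z1 z2 y1 y2 : ℝ) :
    ContinuousAt (fun x : ℝ×ℝ×ℝ×ℝ×ℝ×ℝ =>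
      2*Real.sqrt ((1+x.2.2.2.1)*x.2.1*gD) - 2*x.2.2.2.2.2*(x.2.1*gD+N0+x.1*hC))
      (pC, pD, z1, z2, y1, y2) := by
  fun_prop

set_option maxHeartbeats 1000000 in
/-- Kurdyka–Łojasiewicz property of `F2` (Lemma 1 of the paper): at every point
`x̄` with all coordinates positive, there exist an exponent `θ ∈ [1/2, 1)`, a
constant `η > 0`, and an open neighborhood `U` of `x̄` such that for all
`x ∈ U` with positive coordinates, `|F2 x − F2 x̄|^θ ≤ η · ‖∇F2 x‖`. -/
theorem F2_KL_property
    (gC gD hC hD N0 : ℝ) (hgC : 0 < gC) (hgD : 0 < gD) (hhC : 0 < hC)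
    (hhD : 0 < hD) (hN0 : 0 < N0)
    (xbar : ℝ × ℝ × ℝ × ℝ × ℝ × ℝ) (hxbar : AllPos xbar) :
    ∃ θ ∈ Set.Ico (1/2 : ℝ) 1, ∃ η : ℝ, 0 < η ∧
      ∃ U : Set (ℝ × ℝ × ℝ × ℝ × ℝ × ℝ), IsOpen U ∧ xbar ∈ U ∧
        ∀ x ∈ U, AllPos x →
          |F2 gC gD hC hD N0 x - F2 gC gD hC hD N0 xbar| ^ θ ≤
            η * ‖fderiv ℝ (F2 gC gD hC hD N0) x‖ := by
  obtain ⟨pC, pD, z1, z2, y1, y2⟩ := xbar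
  obtain ⟨hpC, hpD, hz1, hz2, hy1, hy2⟩ := hxbar
  have hQ1 : (0:ℝ) < (1+z1)*pC*gC := by positivity
  have hQ2 : (0:ℝ) < (1+z2)*pD*gD := by positivity
  have h1z1 : (0:ℝ) < 1 + z1 := by linarith
  have h1z2 : (0:ℝ) < 1 + z2 := by linarith
  have hS1p : 0 < Real.sqrt ((1+z1)*pC*gC) := Real.sqrt_pos.mpr hQ1
  have hS2p : 0 < Real.sqrt ((1+z2)*pD*gD) := Real.sqrt_pos.mpr hQ2
  have hS1 : (Real.sqrt ((1+z1)*pC*gC))^2 = (1+z1)*pC*gC := Real.sq_sqrt hQ1.le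
  have hS2 : (Real.sqrt ((1+z2)*pD*gD))^2 = (1+z2)*pD*gD := Real.sq_sqrt hQ2.le
  -- generic finisher
  have main : ∀ (e : ℝ×ℝ×ℝ×ℝ×ℝ×ℝ) (D : (ℝ×ℝ×ℝ×ℝ×ℝ×ℝ) → ℝ), ‖e‖ = 1 →
      ContinuousAt D (pC, pD, z1, z2, y1, y2) →
      D (pC, pD, z1, z2, y1, y2) ≠ 0 →
      (∀ x, AllPos x → fderiv ℝ (F2 gC gD hC hD N0) x e = D x) →
      (∃ θ ∈ Set.Ico (1/2 : ℝ) 1, ∃ η : ℝ, 0 < η ∧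
        ∃ U : Set (ℝ × ℝ × ℝ × ℝ × ℝ × ℝ), IsOpen U ∧
          (pC, pD, z1, z2, y1, y2) ∈ U ∧
          ∀ x ∈ U, AllPos x →
            |F2 gC gD hC hD N0 x -
                F2 gC gD hC hD N0 (pC, pD, z1, z2, y1, y2)| ^ θ ≤
              η * ‖fderiv ℝ (F2 gC gD hC hD N0) x‖) := by
    intro e D he hcont hDne hDeq
    have habs : 0 < |D (pC, pD, z1, z2, y1, y2)| := abs_pos.mpr hDne
    refine ⟨1/2, ⟨le_refl _, by norm_num⟩,
      2/|D (pC, pD, z1, z2, y1, y2)|, by positivity, ?_⟩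
    have hF2c : ContinuousAt (F2 gC gD hC hD N0) (pC, pD, z1, z2, y1, y2) :=
      (diffF2 gC gD hC hD N0 hgC hgD _
        ⟨hpC, hpD, hz1, hz2, hy1, hy2⟩).continuousAt
    have h1 : ∀ᶠ x in nhds (pC, pD, z1, z2, y1, y2),
        |D (pC, pD, z1, z2, y1, y2)|/2 < |D x| := by
      have hca : ContinuousAt (fun x => |D x|) (pC, pD, z1, z2, y1, y2) :=
        hcont.abs
      exact hca (Ioi_mem_nhds (half_lt_self habs))
    have h2 : ∀ᶠ x in nhds (pC, pD, z1, z2, y1, y2),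
        |F2 gC gD hC hD N0 x - F2 gC gD hC hD N0 (pC, pD, z1, z2, y1, y2)| < 1 := by
      have hca : ContinuousAt (fun x =>
          |F2 gC gD hC hD N0 x - F2 gC gD hC hD N0 (pC, pD, z1, z2, y1, y2)|)
          (pC, pD, z1, z2, y1, y2) := (hF2c.sub continuousAt_const).abs
      have := hca (Iio_mem_nhds (by simp : |F2 gC gD hC hD N0 (pC, pD, z1, z2, y1, y2)
        - F2 gC gD hC hD N0 (pC, pD, z1, z2, y1, y2)| < 1))
      exact this
    obtain ⟨U, hU1, hU2, hU3⟩ := eventually_nhds_iff.mp (h1.and h2)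
    refine ⟨U, hU2, hU3, ?_⟩
    intro x hxU hxpos
    obtain ⟨hd1, hd2⟩ := hU1 x hxU
    have hnorm : |D x| ≤ ‖fderiv ℝ (F2 gC gD hC hD N0) x‖ := by
      calc |D x| = ‖fderiv ℝ (F2 gC gD hC hD N0) x e‖ := by
            rw [hDeq x hxpos, Real.norm_eq_abs]
        _ ≤ ‖fderiv ℝ (F2 gC gD hC hD N0) x‖ * ‖e‖ :=
            (fderiv ℝ (F2 gC gD hC hD N0) x).le_opNorm e
        _ = ‖fderiv ℝ (F2 gC gD hC hD N0) x‖ := by rw [he, mul_one]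
    have hb : |D (pC, pD, z1, z2, y1, y2)|/2 ≤ ‖fderiv ℝ (F2 gC gD hC hD N0) x‖ :=
      le_trans hd1.le hnorm
    calc |F2 gC gD hC hD N0 x - F2 gC gD hC hD N0 (pC, pD, z1, z2, y1, y2)| ^ ((1:ℝ)/2)
        ≤ 1 := Real.rpow_le_one (abs_nonneg _) hd2.le (by norm_num)
      _ = (2/|D (pC, pD, z1, z2, y1, y2)|) * (|D (pC, pD, z1, z2, y1, y2)|/2) := by
          field_simp
      _ ≤ (2/|D (pC, pD, z1, z2, y1, y2)|) * ‖fderiv ℝ (F2 gC gD hC hD N0) x‖ := by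
          exact mul_le_mul_of_nonneg_left hb (by positivity)
  -- choose a nonvanishing partial derivative
  have hchoice :
      2*y1*((1+z1)*gC/(2*Real.sqrt ((1+z1)*pC*gC))) - y1^2*gC - y2^2*hC ≠ 0 ∨
      2*y2*((1+z2)*gD/(2*Real.sqrt ((1+z2)*pD*gD))) - y2^2*gD - y1^2*hD ≠ 0 ∨
      1/(1+z1) - 1 + 2*y1*(pC*gC/(2*Real.sqrt ((1+z1)*pC*gC))) ≠ 0 ∨
      1/(1+z2) - 1 + 2*y2*(pD*gD/(2*Real.sqrt ((1+z2)*pD*gD))) ≠ 0 ∨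
      2*Real.sqrt ((1+z1)*pC*gC) - 2*y1*(pC*gC+N0+pD*hD) ≠ 0 ∨
      2*Real.sqrt ((1+z2)*pD*gD) - 2*y2*(pD*gD+N0+pC*hC) ≠ 0 := by
    by_contra hcon
    push_neg at hcon
    obtain ⟨c1, c2, c3, c4, c5, c6⟩ := hcon
    exact no_crit gC gD hC hD N0 pC pD z1 z2 y1 y2
      (Real.sqrt ((1+z1)*pC*gC)) (Real.sqrt ((1+z2)*pD*gD))
      hgC hgD hhC hhD hN0 hpC hpD hz1 hz2 hy1 hy2 hS1 hS1p hS2 hS2p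
      c1 c2 c3 c4 c5 c6
  have hP : ∀ x : ℝ×ℝ×ℝ×ℝ×ℝ×ℝ, AllPos x →
      fderiv ℝ (F2 gC gD hC hD N0) x (1,0,0,0,0,0)
        = 2*x.2.2.2.2.1*((1+x.2.2.1)*gC/(2*Real.sqrt ((1+x.2.2.1)*x.1*gC)))
            - x.2.2.2.2.1^2*gC - x.2.2.2.2.2^2*hC ∧
      fderiv ℝ (F2 gC gD hC hD N0) x (0,1,0,0,0,0)
        = 2*x.2.2.2.2.2*((1+x.2.2.2.1)*gD/(2*Real.sqrt ((1+x.2.2.2.1)*x.2.1*gD)))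
            - x.2.2.2.2.2^2*gD - x.2.2.2.2.1^2*hD ∧
      fderiv ℝ (F2 gC gD hC hD N0) x (0,0,1,0,0,0)
        = 1/(1+x.2.2.1) - 1 + 2*x.2.2.2.2.1*(x.1*gC/(2*Real.sqrt ((1+x.2.2.1)*x.1*gC))) ∧
      fderiv ℝ (F2 gC gD hC hD N0) x (0,0,0,1,0,0)
        = 1/(1+x.2.2.2.1) - 1
            + 2*x.2.2.2.2.2*(x.2.1*gD/(2*Real.sqrt ((1+x.2.2.2.1)*x.2.1*gD))) ∧
      fderiv ℝ (F2 gC gD hC hD N0) x (0,0,0,0,1,0)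
        = 2*Real.sqrt ((1+x.2.2.1)*x.1*gC)
            - 2*x.2.2.2.2.1*(x.1*gC+N0+x.2.1*hD) ∧
      fderiv ℝ (F2 gC gD hC hD N0) x (0,0,0,0,0,1)
        = 2*Real.sqrt ((1+x.2.2.2.1)*x.2.1*gD)
            - 2*x.2.2.2.2.2*(x.2.1*gD+N0+x.1*hC) := by
    rintro ⟨a1, a2, a3, a4, a5, a6⟩ ⟨b1, b2, b3, b4, b5, b6⟩
    exact partials gC gD hC hD N0 hgC hgD a1 a2 a3 a4 a5 a6 b1 b2 b3 b4 b5 b6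
  have hS1ne : Real.sqrt ((1+z1)*pC*gC) ≠ 0 := hS1p.ne'
  have hS2ne : Real.sqrt ((1+z2)*pD*gD) ≠ 0 := hS2p.ne'
  have h1z1' : 1 + z1 ≠ 0 := h1z1.ne'
  have h1z2' : 1 + z2 ≠ 0 := h1z2.ne'
  rcases hchoice with hc | hc | hc | hc | hc | hc
  · exact main (1,0,0,0,0,0) (fun x =>
      2*x.2.2.2.2.1*((1+x.2.2.1)*gC/(2*Real.sqrt ((1+x.2.2.1)*x.1*gC)))
        - x.2.2.2.2.1^2*gC - x.2.2.2.2.2^2*hC)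
      (by simp [Prod.norm_def])
      (contD1 gC hC pC pD z1 z2 y1 y2 hS1ne)
      hc (fun x hx => (hP x hx).1)
  · exact main (0,1,0,0,0,0) (fun x =>
      2*x.2.2.2.2.2*((1+x.2.2.2.1)*gD/(2*Real.sqrt ((1+x.2.2.2.1)*x.2.1*gD)))
        - x.2.2.2.2.2^2*gD - x.2.2.2.2.1^2*hD)
      (by simp [Prod.norm_def])
      (contD2 gD hD pC pD z1 z2 y1 y2 hS2ne)
      hc (fun x hx => (hP x hx).2.1)
  · exact main (0,0,1,0,0,0) (fun x =>
      1/(1+x.2.2.1) - 1 + 2*x.2.2.2.2.1*(x.1*gC/(2*Real.sqrt ((1+x.2.2.1)*x.1*gC))))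
      (by simp [Prod.norm_def])
      (contD3 gC pC pD z1 z2 y1 y2 hS1ne h1z1')
      hc (fun x hx => (hP x hx).2.2.1)
  · exact main (0,0,0,1,0,0) (fun x =>
      1/(1+x.2.2.2.1) - 1
        + 2*x.2.2.2.2.2*(x.2.1*gD/(2*Real.sqrt ((1+x.2.2.2.1)*x.2.1*gD))))
      (by simp [Prod.norm_def])
      (contD4 gD pC pD z1 z2 y1 y2 hS2ne h1z2')
      hc (fun x hx => (hP x hx).2.2.2.1)
  · exact main (0,0,0,0,1,0) (fun x =>
      2*Real.sqrt ((1+x.2.2.1)*x.1*gC) - 2*x.2.2.2.2.1*(x.1*gC+N0+x.2.1*hD))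
      (by simp [Prod.norm_def])
      (contD5 gC hD N0 pC pD z1 z2 y1 y2)
      hc (fun x hx => (hP x hx).2.2.2.2.1)
  · exact main (0,0,0,0,0,1) (fun x =>
      2*Real.sqrt ((1+x.2.2.2.1)*x.2.1*gD) - 2*x.2.2.2.2.2*(x.2.1*gD+N0+x.1*hC))
      (by simp [Prod.norm_def])
      (contD6 gD hC N0 pC pD z1 z2 y1 y2)
      hc (fun x hx => (hP x hx).2.2.2.2.2)
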